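/- Let G be a group and g ∈ G. If g^n is a generalized torsion element of G for some positive integer n, then g is a generalized torsion element of G. -/

import Mathlib

/-- `g` is a generalized torsion element of `G`: some nonempty finite product of
conjugates of `g` equals the identity. -/
def IsGenTorsion {G : Type*} [Group G] (g : G) : Prop :=
  ∃ xs : List G, xs ≠ [] ∧ (xs.map (fun x => x⁻¹ * g * x)).prod = 1

theorem genTorsion_of_pow {G : Type*} [Group G] (g : G) (n : ℕ) (hn : 0 < n)
    (h : IsGenTorsion (g ^ n)) : IsGenTorsion g := by
  obtain ⟨xs, hne, hp⟩ := h
  refine ⟨xs.flatMap (fun x => List.replicate n x), ?_, ?_⟩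
  · cases xs with
    | nil => exact absurd rfl hne
    | cons a t =>
      simp [List.replicate, hn.ne']
  · have key : ∀ ys : List G,
        ((ys.flatMap (fun x => List.replicate n x)).map (fun x => x⁻¹ * g * x)).prod
          = (ys.map (fun x => x⁻¹ * (g ^ n) * x)).prod := by
      intro ys
      induction ys with
      | nil => simp
      | cons a t ih =>
        simp only [List.flatMap_cons, List.map_append, List.prod_append, List.map_cons,
          List.prod_cons, ih]
        congr 1
        rw [List.map_replicate, List.prod_replicate]
        simpa [mul_assoc] using (conj_pow (a := a⁻¹) (b := g) (i := n))
    rw [key, hp]
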